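/- Let G be a finite simple graph with vertex set V, let k be a positive integer, and let T ⊆ V satisfy |Γ_T(Z)| ≥ k − 1 for every T-cut Z (T is (k−1)-connected). Fix r ∈ T and S ⊆ V \ T, and let D(r,S) be the family of all T-cuts X with |Γ_T(X)| = k − 1 and r ∉ X⁺ that are not covered by any T-path all of whose vertices lie in T ∪ S. Let X, Y ∈ D(r,S). If X is minimal in D(r,S) (with respect to inclusion), then X ∩ Y = ∅ or X ⊆ Y; if X is maximal in D(r,S), then X ∩ Y = ∅ or Y ⊆ X. -/
import Mathlib

/-- `nbr G X` is Γ(X): the set of vertices outside `X` adjacent to a vertex of `X`. -/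
def nbr {V : Type*} [Fintype V] [DecidableEq V] (G : SimpleGraph V) [DecidableRel G.Adj]
    (X : Finset V) : Finset V :=
  Finset.univ.filter (fun v => v ∉ X ∧ ∃ u ∈ X, G.Adj u v)

/-- `cl G X` is X⁺ = X ∪ Γ(X). -/
def cl {V : Type*} [Fintype V] [DecidableEq V] (G : SimpleGraph V) [DecidableRel G.Adj]
    (X : Finset V) : Finset V :=
  X ∪ nbr G X

/-- `covered G T S X` means some T-path, all of whose vertices lie in `T ∪ S`,
covers the T-cut `X`. -/
def covered {V : Type*} [Fintype V] [DecidableEq V] (G : SimpleGraph V) [DecidableRel G.Adj]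
    (T S X : Finset V) : Prop :=
  ∃ (a b : V) (p : G.Walk a b), p.IsPath ∧ a ∈ X ∧ b ∈ T \ cl G X ∧
    (∀ w ∈ p.support, w ≠ a → w ≠ b → w ∉ T) ∧ (∀ w ∈ p.support, w ∈ T ∪ S)

/-- The family D(r,S) of demand cuts avoiding `r` that are not covered by a T-path
in G[T ∪ S]. -/
def Dfam {V : Type*} [Fintype V] [DecidableEq V] (G : SimpleGraph V) [DecidableRel G.Adj]
    (T S : Finset V) (k : ℕ) (r : V) : Set (Finset V) :=
  {X | X ⊆ T ∧ X.Nonempty ∧ (T \ cl G X).Nonempty ∧ (nbr G X ∩ T).card = k - 1 ∧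
    r ∉ cl G X ∧ ¬ covered G T S X}

section Aux
variable {V : Type*} [Fintype V] [DecidableEq V] (G : SimpleGraph V) [DecidableRel G.Adj]

lemma mem_nbr' {X : Finset V} {v : V} : v ∈ nbr G X ↔ v ∉ X ∧ ∃ u ∈ X, G.Adj u v := by
  simp [nbr]

lemma mem_cl' {X : Finset V} {v : V} :
    v ∈ cl G X ↔ v ∈ X ∨ (v ∉ X ∧ ∃ u ∈ X, G.Adj u v) := by
  simp [cl, mem_nbr', Finset.mem_union]

lemma cl_mono' {X Y : Finset V} (h : X ⊆ Y) : cl G X ⊆ cl G Y := by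
  intro v hv
  rcases (mem_cl' G).1 hv with hv | ⟨hvn, u, hu, hadj⟩
  · exact (mem_cl' G).2 (Or.inl (h hv))
  · by_cases hvy : v ∈ Y
    · exact (mem_cl' G).2 (Or.inl hvy)
    · exact (mem_cl' G).2 (Or.inr ⟨hvy, u, h hu, hadj⟩)

lemma cl_union' (X Y : Finset V) : cl G (X ∪ Y) = cl G X ∪ cl G Y := by
  apply Finset.Subset.antisymm
  · intro v hv
    rcases (mem_cl' G).1 hv with hv | ⟨hvn, u, hu, hadj⟩
    · rcases Finset.mem_union.1 hv with h | h
      · exact Finset.mem_union_left _ ((mem_cl' G).2 (Or.inl h))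
      · exact Finset.mem_union_right _ ((mem_cl' G).2 (Or.inl h))
    · rcases Finset.mem_union.1 hu with h | h
      · exact Finset.mem_union_left _ ((mem_cl' G).2
          (Or.inr ⟨fun hx => hvn (Finset.mem_union_left _ hx), u, h, hadj⟩))
      · exact Finset.mem_union_right _ ((mem_cl' G).2
          (Or.inr ⟨fun hx => hvn (Finset.mem_union_right _ hx), u, h, hadj⟩))
  · exact Finset.union_subset (cl_mono' G Finset.subset_union_left)
      (cl_mono' G Finset.subset_union_right)

lemma covered_union {T S X Y : Finset V} (h : covered G T S (X ∪ Y)) :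
    covered G T S X ∨ covered G T S Y := by
  obtain ⟨a, b, p, hp, ha, hb, hin, hall⟩ := h
  rw [Finset.mem_sdiff] at hb
  have hbX : b ∉ cl G X := fun hc => hb.2 (cl_mono' G Finset.subset_union_left hc)
  have hbY : b ∉ cl G Y := fun hc => hb.2 (cl_mono' G Finset.subset_union_right hc)
  rcases Finset.mem_union.1 ha with h | h
  · exact Or.inl ⟨a, b, p, hp, h, Finset.mem_sdiff.2 ⟨hb.1, hbX⟩, hin, hall⟩
  · exact Or.inr ⟨a, b, p, hp, h, Finset.mem_sdiff.2 ⟨hb.1, hbY⟩, hin, hall⟩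

lemma covered_inter {T S X Y : Finset V}
    (hkey : ∀ v ∈ T, v ∈ cl G X → v ∈ cl G Y → v ∈ cl G (X ∩ Y))
    (h : covered G T S (X ∩ Y)) :
    covered G T S X ∨ covered G T S Y := by
  obtain ⟨a, b, p, hp, ha, hb, hin, hall⟩ := h
  rw [Finset.mem_sdiff] at hb
  rw [Finset.mem_inter] at ha
  by_cases hbX : b ∈ cl G X
  · have hbY : b ∉ cl G Y := fun hc => hb.2 (hkey b hb.1 hbX hc)
    exact Or.inr ⟨a, b, p, hp, ha.2, Finset.mem_sdiff.2 ⟨hb.1, hbY⟩, hin, hall⟩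
  · exact Or.inl ⟨a, b, p, hp, ha.1, Finset.mem_sdiff.2 ⟨hb.1, hbX⟩, hin, hall⟩

end Aux

theorem stmt_6 {V : Type*} [Fintype V] [DecidableEq V]
    (G : SimpleGraph V) [DecidableRel G.Adj] (k : ℕ) (hk : 1 ≤ k)
    (T : Finset V)
    -- T is (k-1)-connected: |Γ_T(Z)| ≥ k-1 for every T-cut Z
    (hTconn : ∀ Z : Finset V, Z ⊆ T → Z.Nonempty → (T \ cl G Z).Nonempty →
      k - 1 ≤ (nbr G Z ∩ T).card)
    (r : V) (hr : r ∈ T) (S : Finset V) (hS : S ⊆ Finset.univ \ T)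
    (X Y : Finset V) (hX : X ∈ Dfam G T S k r) (hY : Y ∈ Dfam G T S k r) :
    ((∀ Z ∈ Dfam G T S k r, Z ⊆ X → Z = X) → X ∩ Y = ∅ ∨ X ⊆ Y) ∧
    ((∀ Z ∈ Dfam G T S k r, X ⊆ Z → Z = X) → X ∩ Y = ∅ ∨ Y ⊆ X) := by
  obtain ⟨hX1, hX2, hX3, hX4, hX5, hX6⟩ := hX
  obtain ⟨hY1, hY2, hY3, hY4, hY5, hY6⟩ := hY
  by_cases hXY : X ∩ Y = ∅
  · exact ⟨fun _ => Or.inl hXY, fun _ => Or.inl hXY⟩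
  have hne : (X ∩ Y).Nonempty := Finset.nonempty_iff_ne_empty.2 hXY
  -- r avoids everything
  have hrU : r ∉ cl G (X ∪ Y) := by
    rw [cl_union']; exact fun hc => (Finset.mem_union.1 hc).elim hX5 hY5
  have hclI : cl G (X ∩ Y) ⊆ cl G X := cl_mono' G Finset.inter_subset_left
  have hrI : r ∉ cl G (X ∩ Y) := fun hc => hX5 (hclI hc)
  have hTU : (T \ cl G (X ∪ Y)).Nonempty := ⟨r, Finset.mem_sdiff.2 ⟨hr, hrU⟩⟩
  have hTI : (T \ cl G (X ∩ Y)).Nonempty := ⟨r, Finset.mem_sdiff.2 ⟨hr, hrI⟩⟩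
  have hUT : X ∪ Y ⊆ T := Finset.union_subset hX1 hY1
  have hIT : X ∩ Y ⊆ T := fun v hv => hX1 (Finset.mem_inter.1 hv).1
  -- submodularity
  set A := nbr G (X ∪ Y) ∩ T with hA
  set B := nbr G (X ∩ Y) ∩ T with hB
  set C := nbr G X ∩ T with hC
  set D := nbr G Y ∩ T with hD
  have h1 : A ∪ B ⊆ C ∪ D := by
    intro v hv
    rcases Finset.mem_union.1 hv with hv | hv
    · obtain ⟨hv1, hv2⟩ := Finset.mem_inter.1 hv
      obtain ⟨hvn, u, hu, hadj⟩ := (mem_nbr' G).1 hv1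
      rcases Finset.mem_union.1 hu with h | h
      · exact Finset.mem_union_left _ (Finset.mem_inter.2
          ⟨(mem_nbr' G).2 ⟨fun hx => hvn (Finset.mem_union_left _ hx), u, h, hadj⟩, hv2⟩)
      · exact Finset.mem_union_right _ (Finset.mem_inter.2
          ⟨(mem_nbr' G).2 ⟨fun hx => hvn (Finset.mem_union_right _ hx), u, h, hadj⟩, hv2⟩)
    · obtain ⟨hv1, hv2⟩ := Finset.mem_inter.1 hv
      obtain ⟨hvn, u, hu, hadj⟩ := (mem_nbr' G).1 hv1
      obtain ⟨huX, huY⟩ := Finset.mem_inter.1 hu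
      by_cases hvX : v ∈ X
      · have hvY : v ∉ Y := fun hc => hvn (Finset.mem_inter.2 ⟨hvX, hc⟩)
        exact Finset.mem_union_right _ (Finset.mem_inter.2
          ⟨(mem_nbr' G).2 ⟨hvY, u, huY, hadj⟩, hv2⟩)
      · exact Finset.mem_union_left _ (Finset.mem_inter.2
          ⟨(mem_nbr' G).2 ⟨hvX, u, huX, hadj⟩, hv2⟩)
  have h2 : A ∩ B ⊆ C ∩ D := by
    intro v hv
    obtain ⟨hvA, hvB⟩ := Finset.mem_inter.1 hv
    obtain ⟨hv1, hv2⟩ := Finset.mem_inter.1 hvA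
    obtain ⟨hvnU, _⟩ := (mem_nbr' G).1 hv1
    obtain ⟨hv3, _⟩ := Finset.mem_inter.1 hvB
    obtain ⟨_, u, hu, hadj⟩ := (mem_nbr' G).1 hv3
    obtain ⟨huX, huY⟩ := Finset.mem_inter.1 hu
    have hvX : v ∉ X := fun hc => hvnU (Finset.mem_union_left _ hc)
    have hvY : v ∉ Y := fun hc => hvnU (Finset.mem_union_right _ hc)
    exact Finset.mem_inter.2 ⟨Finset.mem_inter.2 ⟨(mem_nbr' G).2 ⟨hvX, u, huX, hadj⟩, hv2⟩,
      Finset.mem_inter.2 ⟨(mem_nbr' G).2 ⟨hvY, u, huY, hadj⟩, hv2⟩⟩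
  have hAk : k - 1 ≤ A.card := hTconn _ hUT (hX2.mono Finset.subset_union_left) hTU
  have hBk : k - 1 ≤ B.card := hTconn _ hIT hne hTI
  have hsum : A.card + B.card ≤ C.card + D.card := by
    rw [← Finset.card_union_add_card_inter A B, ← Finset.card_union_add_card_inter C D]
    exact add_le_add (Finset.card_le_card h1) (Finset.card_le_card h2)
  rw [hX4, hY4] at hsum
  have hAcard : A.card = k - 1 := by omega
  have hBcard : B.card = k - 1 := by omega
  have hUeq : A ∪ B = C ∪ D := by
    apply Finset.eq_of_subset_of_card_le h1
    have e1 : (A ∪ B).card + (A ∩ B).card = (k-1) + (k-1) := by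
      rw [Finset.card_union_add_card_inter, hAcard, hBcard]
    have e2 : (C ∪ D).card + (C ∩ D).card = (k-1) + (k-1) := by
      rw [Finset.card_union_add_card_inter, hX4, hY4]
    have := Finset.card_le_card h2
    omega
  have hIeq : A ∩ B = C ∩ D := by
    apply Finset.eq_of_subset_of_card_le h2
    have e1 : (A ∪ B).card + (A ∩ B).card = (k-1) + (k-1) := by
      rw [Finset.card_union_add_card_inter, hAcard, hBcard]
    have e2 : (C ∪ D).card + (C ∩ D).card = (k-1) + (k-1) := by
      rw [Finset.card_union_add_card_inter, hX4, hY4]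
    have := Finset.card_le_card h1
    omega
  -- key lemma
  have hkey : ∀ v ∈ T, v ∈ cl G X → v ∈ cl G Y → v ∈ cl G (X ∩ Y) := by
    intro v hvT hvX hvY
    by_cases hX' : v ∈ X
    · by_cases hY' : v ∈ Y
      · exact (mem_cl' G).2 (Or.inl (Finset.mem_inter.2 ⟨hX', hY'⟩))
      · -- v ∈ X, v ∈ nbr Y, so v ∈ D ⊆ C ∪ D = A ∪ B; v ∉ A since v ∈ X ∪ Y
        have hvD : v ∈ D := by
          rcases (mem_cl' G).1 hvY with h | h
          · exact absurd h hY'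
          · exact Finset.mem_inter.2 ⟨(mem_nbr' G).2 h, hvT⟩
        have : v ∈ A ∪ B := hUeq ▸ Finset.mem_union_right _ hvD
        rcases Finset.mem_union.1 this with h | h
        · obtain ⟨h', _⟩ := Finset.mem_inter.1 h
          exact absurd (Finset.mem_union_left _ hX') ((mem_nbr' G).1 h').1
        · exact Finset.mem_union.2 (Or.inr (Finset.mem_inter.1 h).1)
    · by_cases hY' : v ∈ Y
      · have hvC : v ∈ C := by
          rcases (mem_cl' G).1 hvX with h | h
          · exact absurd h hX'
          · exact Finset.mem_inter.2 ⟨(mem_nbr' G).2 h, hvT⟩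
        have : v ∈ A ∪ B := hUeq ▸ Finset.mem_union_left _ hvC
        rcases Finset.mem_union.1 this with h | h
        · obtain ⟨h', _⟩ := Finset.mem_inter.1 h
          exact absurd (Finset.mem_union_right _ hY') ((mem_nbr' G).1 h').1
        · exact Finset.mem_union.2 (Or.inr (Finset.mem_inter.1 h).1)
      · -- v ∈ nbr X ∩ nbr Y : v ∈ C ∩ D = A ∩ B ⊆ B
        have hvC : v ∈ C := by
          rcases (mem_cl' G).1 hvX with h | h
          · exact absurd h hX'
          · exact Finset.mem_inter.2 ⟨(mem_nbr' G).2 h, hvT⟩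
        have hvD : v ∈ D := by
          rcases (mem_cl' G).1 hvY with h | h
          · exact absurd h hY'
          · exact Finset.mem_inter.2 ⟨(mem_nbr' G).2 h, hvT⟩
        have : v ∈ A ∩ B := hIeq ▸ Finset.mem_inter.2 ⟨hvC, hvD⟩
        exact Finset.mem_union.2 (Or.inr (Finset.mem_inter.1 (Finset.mem_inter.1 this).2).1)
  -- membership of X ∩ Y and X ∪ Y in Dfam
  have hInt : X ∩ Y ∈ Dfam G T S k r := by
    refine ⟨hIT, hne, hTI, hBcard, hrI, fun hc => ?_⟩
    rcases covered_inter G hkey hc with h | h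
    · exact hX6 h
    · exact hY6 h
  have hUn : X ∪ Y ∈ Dfam G T S k r := by
    refine ⟨hUT, hX2.mono Finset.subset_union_left, hTU, hAcard, hrU, fun hc => ?_⟩
    rcases covered_union G hc with h | h
    · exact hX6 h
    · exact hY6 h
  constructor
  · intro hmin
    right
    exact Finset.inter_eq_left.mp (hmin _ hInt Finset.inter_subset_left)
  · intro hmax
    right
    exact Finset.union_eq_left.mp (hmax _ hUn Finset.subset_union_left)
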